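/- Let S be a finite spanning subset of a finite-dimensional real vector space V, and for x ∈ V define the robustness R(x) as the infimum of Σᵢ |qᵢ| over all finite decompositions x = Σᵢ qᵢ sᵢ with sᵢ ∈ S and Σᵢ qᵢ = 1. Then R(x) = 1 if and only if x lies in the convex hull of S, and R(x) > 1 otherwise (for any x admitting such a decomposition). -/

import Mathlib

/-- The robustness of `x` with respect to the finite set `S`: the infimum of `∑ |qᵢ|`
over all affine decompositions `x = ∑ qᵢ sᵢ` with `sᵢ ∈ S` and `∑ qᵢ = 1`. -/
noncomputable def rob {V : Type*} [AddCommGroup V] [Module ℝ V] (S : Finset V) (x : V) : ℝ :=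
  sInf {r : ℝ | ∃ q : V → ℝ,
    (∑ s ∈ S, q s = 1) ∧ (∑ s ∈ S, q s • s = x) ∧ r = ∑ s ∈ S, |q s|}

namespace RobAux

variable {V : Type*} [AddCommGroup V] [Module ℝ V]

open Classical in
/-- Extension of a function on the subtype to all of `V`. -/
noncomputable def ext (S : Finset V) (p : S → ℝ) : V → ℝ :=
  fun v => if h : v ∈ S then p ⟨v, h⟩ else 0

lemma sum_ext (S : Finset V) (p : S → ℝ) {M : Type*} [AddCommMonoid M] [Module ℝ M]
    (f : ℝ → V → M) :
    ∑ s ∈ S, f (ext S p s) s = ∑ s : S, f (p s) (s : V) := by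
  rw [← Finset.sum_attach S (fun s => f (ext S p s) s)]
  apply Finset.sum_congr rfl
  intro s _
  simp only [ext, dif_pos s.2]

lemma robust_mem (S : Finset V) (x : V) (p : S → ℝ)
    (h1 : ∑ s : S, p s = 1) (h2 : ∑ s : S, p s • (s : V) = x) :
    (∑ s : S, |p s|) ∈ {r : ℝ | ∃ q : V → ℝ,
      (∑ s ∈ S, q s = 1) ∧ (∑ s ∈ S, q s • s = x) ∧ r = ∑ s ∈ S, |q s|} := by
  refine ⟨ext S p, ?_, ?_, ?_⟩
  · exact (sum_ext S p (fun a _ => a)).trans h1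
  · exact (sum_ext S p (fun a v => a • v)).trans h2
  · exact (sum_ext S p (fun a _ => |a|)).symm

lemma rob_attained [FiniteDimensional ℝ V] (S : Finset V) (x : V)
    (hx : ∃ q : V → ℝ, (∑ s ∈ S, q s = 1) ∧ ∑ s ∈ S, q s • s = x) :
    ∃ q : V → ℝ, (∑ s ∈ S, q s = 1) ∧ (∑ s ∈ S, q s • s = x) ∧
      rob S x = ∑ s ∈ S, |q s| := by
  classical
  set A : Set ℝ := {r : ℝ | ∃ q : V → ℝ,
    (∑ s ∈ S, q s = 1) ∧ (∑ s ∈ S, q s • s = x) ∧ r = ∑ s ∈ S, |q s|} with hA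
  obtain ⟨q₀, hq₀1, hq₀2⟩ := hx
  have hAne : A.Nonempty := ⟨∑ s ∈ S, |q₀ s|, q₀, hq₀1, hq₀2, rfl⟩
  have hAbdd : BddBelow A := by
    refine ⟨0, fun r hr => ?_⟩
    obtain ⟨q, _, _, rfl⟩ := hr
    positivity
  -- pick an element of A below sInf A + 1
  obtain ⟨a₀, ha₀A, ha₀lt⟩ := Real.lt_sInf_add_pos hAne (by norm_num : (0:ℝ) < 1)
  -- the linear map
  let L : (S → ℝ) →ₗ[ℝ] V :=
    (Fintype.linearCombination ℝ (fun s : S => (s : V)))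
  have hLapp : ∀ p : S → ℝ, L p = ∑ s : S, p s • (s : V) := fun p =>
    Fintype.linearCombination_apply ℝ (v := fun s : S => (s : V)) p
  -- the constraint set
  set C : Set (S → ℝ) := {p | (∑ s : S, p s = 1) ∧ (∑ s : S, p s • (s : V) = x) ∧
    ∑ s : S, |p s| ≤ sInf A + 1} with hC
  -- restriction of a global q to the subtype
  have restr : ∀ q : V → ℝ, (∑ s ∈ S, q s = 1) → (∑ s ∈ S, q s • s = x) →
      (∑ s : S, (fun t : S => q t) s = 1) ∧ (∑ s : S, (fun t : S => q t) s • (s : V) = x) ∧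
        (∑ s : S, |q (s : V)| = ∑ s ∈ S, |q s|) := by
    intro q h1 h2
    refine ⟨?_, ?_, ?_⟩
    · rw [Finset.sum_coe_sort S (fun v => q v)]; exact h1
    · rw [Finset.sum_coe_sort S (fun v => q v • v)]; exact h2
    · rw [Finset.sum_coe_sort S (fun v => |q v|)]
  obtain ⟨qa, hqa1, hqa2, hqa3⟩ := ha₀A
  have hp₁ := restr qa hqa1 hqa2
  have hCne : C.Nonempty := by
    refine ⟨fun s : S => qa s, hp₁.1, hp₁.2.1, ?_⟩
    rw [hp₁.2.2, ← hqa3]; exact ha₀lt.le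
  -- C is compact
  have hclosed : IsClosed C := by
    have h1 : IsClosed {p : S → ℝ | ∑ s : S, p s = 1} :=
      isClosed_eq (continuous_finset_sum Finset.univ fun s _ => continuous_apply s)
        continuous_const
    have h3 : IsClosed {p : S → ℝ | ∑ s : S, |p s| ≤ sInf A + 1} :=
      isClosed_le (continuous_finset_sum Finset.univ fun s _ => (continuous_apply s).abs)
        continuous_const
    have h2 : IsClosed {p : S → ℝ | ∑ s : S, p s • (s : V) = x} := by
      have hker : IsClosed ((LinearMap.ker L : Submodule ℝ (S → ℝ)) : Set (S → ℝ)) :=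
        Submodule.closed_of_finiteDimensional _
      have p₁mem : L (fun s : S => qa s) = x := by rw [hLapp]; exact hp₁.2.1
      have : {p : S → ℝ | ∑ s : S, p s • (s : V) = x}
          = (fun p : S → ℝ => p - fun s : S => qa s) ⁻¹'
            ((LinearMap.ker L : Submodule ℝ (S → ℝ)) : Set (S → ℝ)) := by
        ext p
        simp only [Set.mem_setOf_eq, Set.mem_preimage, SetLike.mem_coe, LinearMap.mem_ker,
          ← hLapp, map_sub, p₁mem, sub_eq_zero]
      rw [this]
      exact hker.preimage (continuous_id.sub continuous_const)
    have : C = {p : S → ℝ | ∑ s : S, p s = 1} ∩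
        ({p : S → ℝ | ∑ s : S, p s • (s : V) = x} ∩
         {p : S → ℝ | ∑ s : S, |p s| ≤ sInf A + 1}) := by
      ext p; simp [hC, and_assoc]
    rw [this]
    exact h1.inter (h2.inter h3)
  have hbdd : Bornology.IsBounded C := by
    have : C ⊆ Metric.closedBall 0 (sInf A + 1) := by
      intro p hp
      rw [Metric.mem_closedBall, dist_zero_right, pi_norm_le_iff_of_nonneg]
      · intro s
        calc ‖p s‖ = |p s| := rfl
          _ ≤ ∑ t : S, |p t| := Finset.single_le_sum (f := fun t : S => |p t|)
              (fun t _ => abs_nonneg _) (Finset.mem_univ s)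
          _ ≤ sInf A + 1 := hp.2.2
      · have h0 : (0:ℝ) ≤ ∑ t : S, |p t| := Finset.sum_nonneg fun t _ => abs_nonneg _
        linarith [hp.2.2]
    exact (Metric.isBounded_closedBall).subset this
  have hcompact : IsCompact C := Metric.isCompact_iff_isClosed_bounded.2 ⟨hclosed, hbdd⟩
  have hcont : Continuous (fun p : S → ℝ => ∑ s : S, |p s|) :=
    continuous_finset_sum Finset.univ fun s _ => (continuous_apply s).abs
  obtain ⟨p₀, hp₀C, hmin⟩ := hcompact.exists_isMinOn hCne hcont.continuousOn
  -- p₀ realizes the infimum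
  have hmemA : (∑ s : S, |p₀ s|) ∈ A := robust_mem S x p₀ hp₀C.1 hp₀C.2.1
  have hub : ∀ a ∈ A, (∑ s : S, |p₀ s|) ≤ a := by
    intro a ha
    by_cases hle : a ≤ sInf A + 1
    · obtain ⟨q, h1, h2, rfl⟩ := ha
      have hr := restr q h1 h2
      have hmemC : (fun s : S => q s) ∈ C := ⟨hr.1, hr.2.1, by rw [hr.2.2]; exact hle⟩
      rw [← hr.2.2]
      exact hmin hmemC
    · push_neg at hle
      calc (∑ s : S, |p₀ s|) ≤ sInf A + 1 := hp₀C.2.2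
        _ ≤ a := hle.le
  have heq : sInf A = ∑ s : S, |p₀ s| :=
    le_antisymm (csInf_le hAbdd hmemA) (le_csInf hAne hub)
  obtain ⟨q, h1, h2, h3⟩ := hmemA
  exact ⟨q, h1, h2, by rw [rob, ← hA, heq, h3]⟩

end RobAux

theorem stmt_2 {V : Type*} [AddCommGroup V] [Module ℝ V] [FiniteDimensional ℝ V]
    (S : Finset V) (x : V)
    (hx : ∃ q : V → ℝ, (∑ s ∈ S, q s = 1) ∧ ∑ s ∈ S, q s • s = x) :
    (rob S x = 1 ↔ x ∈ convexHull ℝ (S : Set V)) ∧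
      (x ∉ convexHull ℝ (S : Set V) → 1 < rob S x) := by
  classical
  set A : Set ℝ := {r : ℝ | ∃ q : V → ℝ,
    (∑ s ∈ S, q s = 1) ∧ (∑ s ∈ S, q s • s = x) ∧ r = ∑ s ∈ S, |q s|} with hA
  obtain ⟨q₀, hq₀1, hq₀2⟩ := hx
  have hAne : A.Nonempty := ⟨∑ s ∈ S, |q₀ s|, q₀, hq₀1, hq₀2, rfl⟩
  have hAbdd : BddBelow A := by
    refine ⟨0, fun r hr => ?_⟩
    obtain ⟨q, _, _, rfl⟩ := hr
    positivity
  have h1le : 1 ≤ rob S x := by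
    apply le_csInf hAne
    rintro r ⟨q, hq1, -, rfl⟩
    calc (1:ℝ) = ∑ s ∈ S, q s := hq1.symm
      _ ≤ ∑ s ∈ S, |q s| := Finset.sum_le_sum fun s _ => le_abs_self _
  have hforward : rob S x = 1 → x ∈ convexHull ℝ (S : Set V) := by
    intro h
    obtain ⟨q, hq1, hq2, hq3⟩ := RobAux.rob_attained S x ⟨q₀, hq₀1, hq₀2⟩
    have habs : ∑ s ∈ S, |q s| = 1 := by rw [← hq3, h]
    have hzero : ∑ s ∈ S, (|q s| - q s) = 0 := by
      rw [Finset.sum_sub_distrib, habs, hq1, sub_self]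
    have hnn : ∀ s ∈ S, 0 ≤ q s := by
      intro s hs
      have := (Finset.sum_eq_zero_iff_of_nonneg
        (fun t _ => sub_nonneg.2 (le_abs_self (q t)))).1 hzero s hs
      have habs' : |q s| = q s := by linarith
      rw [← habs']; exact abs_nonneg _
    have : S.centerMass q id ∈ convexHull ℝ (S : Set V) :=
      Finset.centerMass_mem_convexHull S hnn (by rw [hq1]; norm_num)
        (fun s hs => by simpa using hs)
    rwa [Finset.centerMass_eq_of_sum_1 _ _ hq1, show (∑ s ∈ S, q s • id s) = x from hq2] at this
  have hback : x ∈ convexHull ℝ (S : Set V) → rob S x = 1 := by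
    intro h
    rw [Finset.convexHull_eq] at h
    obtain ⟨w, hw0, hw1, hwc⟩ := h
    have hle : rob S x ≤ 1 := by
      apply csInf_le hAbdd
      refine ⟨w, hw1, ?_, ?_⟩
      · rw [← hwc, Finset.centerMass_eq_of_sum_1 _ _ hw1]; rfl
      · rw [← hw1]
        exact (Finset.sum_congr rfl fun s hs => (abs_of_nonneg (hw0 s hs)).symm).symm ▸ rfl
    exact le_antisymm hle h1le
  refine ⟨⟨hforward, hback⟩, fun hnot => ?_⟩
  rcases lt_or_eq_of_le h1le with h | h
  · exact h
  · exact absurd (hforward h.symm) hnot
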